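/- Suppose additionally that N < kmax and that u satisfies (U1) and (U2). If a strategy profile s = (s_1, s_2) satisfies s_i(t_i) = c for some i ∈ {1,2} and some arrival pair (t_1, t_2) ∈ T with t_i ≥ N (i.e., some player goes to the canteen at 9:00 or after at a realizable arrival time), then s is not Pareto optimal over T. -/

import Mathlib

/-- The two actions: `c` (canteen) and `o` (office). -/
inductive Act : Type
  | c : Act
  | o : Act
deriving DecidableEq

open Act

/-- The set of arrival pairs
`T = {(k, k+1) : kmin ≤ k ≤ kmax - 1} ∪ {(k, k-1) : kmin + 1 ≤ k ≤ kmax}`. -/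
noncomputable def T (kmin kmax : ℤ) : Finset (ℤ × ℤ) :=
  ((Finset.Icc kmin (kmax - 1)).image (fun k => (k, k + 1))) ∪
  ((Finset.Icc (kmin + 1) kmax).image (fun k => (k, k - 1)))

/-- Subgame `T1 = {(t1,t2) ∈ T : t1 ≡ kmin (mod 2)}`. -/
noncomputable def T1 (kmin kmax : ℤ) : Finset (ℤ × ℤ) :=
  (T kmin kmax).filter (fun t => t.1 % 2 = kmin % 2)

/-- Subgame `T2 = {(t1,t2) ∈ T : t2 ≡ kmin (mod 2)}`. -/
noncomputable def T2 (kmin kmax : ℤ) : Finset (ℤ × ℤ) :=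
  (T kmin kmax).filter (fun t => t.2 % 2 = kmin % 2)

/-- The expected utility of profile `s` over a set `S` of arrival pairs:
`EU_S(s) = (1/|S|) · Σ_{(t1,t2) ∈ S} u_{(t1,t2)}(s_1(t1), s_2(t2))`. -/
noncomputable def EU (u : ℤ × ℤ → Act → Act → ℝ) (s : (ℤ → Act) × (ℤ → Act))
    (S : Finset (ℤ × ℤ)) : ℝ :=
  (∑ t ∈ S, u t (s.1 t.1) (s.2 t.2)) / S.card

/-- `s` is Pareto optimal over `S` if no profile `s'` has `EU_S(s') > EU_S(s)`. -/
def ParetoOptimal (u : ℤ × ℤ → Act → Act → ℝ) (S : Finset (ℤ × ℤ))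
    (s : (ℤ → Act) × (ℤ → Act)) : Prop :=
  ¬ ∃ s' : (ℤ → Act) × (ℤ → Act), EU u s' S > EU u s S

/-- `u` satisfies conditions (U1) and (U2) on the arrival pairs of `T`. -/
def SatisfiesU1U2 (kmin kmax N : ℤ) (u : ℤ × ℤ → Act → Act → ℝ) : Prop :=
  ∀ t ∈ T kmin kmax,
    (t.1 < N ∧ t.2 < N →
      u t c c > u t o o ∧ u t o o > u t c o ∧ u t c o = u t o c) ∧
    (N ≤ t.1 ∨ N ≤ t.2 →
      u t o o > u t c o ∧ u t c o = u t o c ∧ u t o c = u t c c)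

/-- `u` is uniform with values `A > B > C` (the order is assumed separately). -/
def Uniform (kmin kmax N : ℤ) (u : ℤ × ℤ → Act → Act → ℝ) (A B C : ℝ) : Prop :=
  ∀ t ∈ T kmin kmax,
    (t.1 < N ∧ t.2 < N →
      u t c c = A ∧ u t o o = B ∧ u t c o = C ∧ u t o c = C) ∧
    (N ≤ t.1 ∨ N ≤ t.2 →
      u t o o = B ∧ u t c c = C ∧ u t c o = C ∧ u t o c = C)

/-- The cut-off strategy with cut-off `m`: canteen iff arriving strictly before `m`. -/
def cutoff (m : ℤ) : ℤ → Act := fun k => if k < m then c else o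

/-- The all-office strategy. -/
def allOffice : ℤ → Act := fun _ => o

lemma mem_T_up {kmin kmax a : ℤ} (h1 : kmin ≤ a) (h2 : a ≤ kmax - 1) :
    (a, a + 1) ∈ T kmin kmax :=
  Finset.mem_union_left _ (Finset.mem_image.2 ⟨a, Finset.mem_Icc.2 ⟨h1, h2⟩, rfl⟩)

lemma mem_T_down {kmin kmax a : ℤ} (h1 : kmin + 1 ≤ a) (h2 : a ≤ kmax) :
    (a, a - 1) ∈ T kmin kmax :=
  Finset.mem_union_right _ (Finset.mem_image.2 ⟨a, Finset.mem_Icc.2 ⟨h1, h2⟩, rfl⟩)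

lemma T_bounds {kmin kmax : ℤ} {t : ℤ × ℤ} (ht : t ∈ T kmin kmax) :
    kmin ≤ t.1 ∧ t.1 ≤ kmax ∧ kmin ≤ t.2 ∧ t.2 ≤ kmax := by
  rcases Finset.mem_union.1 ht with h | h <;>
  · obtain ⟨k, hk, hkt⟩ := Finset.mem_image.1 h
    rw [Finset.mem_Icc] at hk
    subst hkt
    simp
    omega

/-- Going to the canteen at 9:00 or after (at a realizable arrival pair)
is never Pareto optimal over `T`. -/
theorem stmt_0 (kmin kmax N : ℤ) (h1 : kmin < N) (h2 : N ≤ kmax) (h3 : N < kmax)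
    (u : ℤ × ℤ → Act → Act → ℝ) (hu : SatisfiesU1U2 kmin kmax N u)
    (s : (ℤ → Act) × (ℤ → Act))
    (h : ∃ t ∈ T kmin kmax,
      (N ≤ t.1 ∧ s.1 t.1 = Act.c) ∨ (N ≤ t.2 ∧ s.2 t.2 = Act.c)) :
    ¬ ParetoOptimal u (T kmin kmax) s := by
  intro hpo
  apply hpo
  set s' : (ℤ → Act) × (ℤ → Act) :=
    (fun k => if N ≤ k then o else s.1 k, fun k => if N ≤ k then o else s.2 k) with hs'
  refine ⟨s', ?_⟩
  obtain ⟨t, ht, hcase⟩ := h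
  have key : ∃ t' : ℤ × ℤ, t' ∈ T kmin kmax ∧ N ≤ t'.1 ∧ N ≤ t'.2 ∧
      (s.1 t'.1 = c ∨ s.2 t'.2 = c) := by
    obtain ⟨hb1, hb2, hb3, hb4⟩ := T_bounds ht
    rcases hcase with ⟨hN1, hc1⟩ | ⟨hN2, hc2⟩
    · by_cases hk : t.1 < kmax
      · exact ⟨(t.1, t.1 + 1), mem_T_up hb1 (by omega), hN1, by simp; omega,
          Or.inl hc1⟩
      · exact ⟨(t.1, t.1 - 1), mem_T_down (by omega) hb2, hN1, by simp; omega,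
          Or.inl hc1⟩
    · by_cases hk : t.2 < kmax
      · exact ⟨(t.2 + 1, t.2), by simpa using mem_T_down (a := t.2 + 1) (by omega) (by omega),
          by simp; omega, hN2, Or.inr hc2⟩
      · exact ⟨(t.2 - 1, t.2), by simpa using mem_T_up (a := t.2 - 1) (by omega) (by omega),
          by simp; omega, hN2, Or.inr hc2⟩
  obtain ⟨t', ht', hN1', hN2', hc'⟩ := key
  have hsum : (∑ p ∈ T kmin kmax, u p (s.1 p.1) (s.2 p.2)) <
      (∑ p ∈ T kmin kmax, u p (s'.1 p.1) (s'.2 p.2)) := by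
    apply Finset.sum_lt_sum
    · intro p hp
      by_cases hN : N ≤ p.1 ∨ N ≤ p.2
      · have hU := (hu p hp).2 hN
        rcases hq1 : s.1 p.1 <;> rcases hq2 : s.2 p.2 <;>
          by_cases hp1 : N ≤ p.1 <;> by_cases hp2 : N ≤ p.2 <;>
          simp only [hs', hp1, hp2, if_pos, if_neg, ite_true, ite_false, hq1, hq2] <;>
          first
            | linarith
            | (exfalso; tauto)
      · push_neg at hN
        simp [hs', not_le.2 hN.1, not_le.2 hN.2]
    · refine ⟨t', ht', ?_⟩
      have hU := (hu t' ht').2 (Or.inl hN1')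
      simp only [hs', hN1', hN2', ite_true]
      rcases hc' with hc' | hc' <;> rw [hc']
      · rcases hq : s.2 t'.2 <;> linarith
      · rcases hq : s.1 t'.1 <;> linarith
  have hcard : (0 : ℝ) < (T kmin kmax).card := by
    have : 0 < (T kmin kmax).card := Finset.card_pos.2 ⟨t, ht⟩
    exact_mod_cast this
  unfold EU
  exact (div_lt_div_iff_of_pos_right hcard).2 hsum
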